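/- Let p ∈ [1,2] and let p* be its conjugate exponent (1/p + 1/p* = 1). For every positive integer n, let a_{rs} = exp(2πi·rs/n) for 1 ≤ r,s ≤ n. Then for all vectors y = (y_1,…,y_n) ∈ ℂ^n with (∑_{r=1}^n |y_r|^{p*})^{1/p*} ≤ 1 and z = (z_1,…,z_n) ∈ ℂ^n with max_s |z_s| ≤ 1, one has |∑_{r=1}^{n} ∑_{s=1}^{n} a_{rs}·y_r·z_s| ≤ n^{1/2 + 1/p}. -/

import Mathlib

open scoped ENNReal Real

private lemma ortho_sum (n : ℕ) (hn : 0 < n) (s u : Fin n) :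
    ∑ r : Fin n, Complex.exp (2 * Real.pi * Complex.I * (((r : ℕ) + 1) * ((s : ℕ) + 1)) / n) *
      (starRingEnd ℂ)
        (Complex.exp (2 * Real.pi * Complex.I * (((r : ℕ) + 1) * ((u : ℕ) + 1)) / n)) =
    if s = u then (n : ℂ) else 0 := by
  set ζ : ℂ := Complex.exp (2 * Real.pi * Complex.I / n) with hζdef
  have hprim : IsPrimitiveRoot ζ n := Complex.isPrimitiveRoot_exp n hn.ne'
  have hζ0 : ζ ≠ 0 := Complex.exp_ne_zero _
  have hform : ∀ m : ℕ, Complex.exp (2 * Real.pi * Complex.I * m / n) = ζ ^ m := by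
    intro m
    rw [hζdef, ← Complex.exp_nat_mul]
    ring_nf
  have hconj : (starRingEnd ℂ) ζ = ζ⁻¹ := by
    rw [hζdef, ← Complex.exp_conj, ← Complex.exp_neg]
    congr 1
    simp [map_div₀, Complex.conj_I, map_ofNat]
    ring
  have hterm : ∀ r : Fin n,
      Complex.exp (2 * Real.pi * Complex.I * (((r : ℕ) + 1) * ((s : ℕ) + 1)) / n) *
        (starRingEnd ℂ)
          (Complex.exp (2 * Real.pi * Complex.I * (((r : ℕ) + 1) * ((u : ℕ) + 1)) / n)) =
      (ζ ^ ((s : ℤ) - (u : ℤ))) ^ ((r : ℕ) + 1) := by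
    intro r
    have h1 : (2 : ℂ) * Real.pi * Complex.I * (((r : ℕ) + 1) * ((s : ℕ) + 1)) / n
        = 2 * Real.pi * Complex.I * ((((r : ℕ) + 1) * ((s : ℕ) + 1) : ℕ)) / n := by
      push_cast; ring
    have h2 : (2 : ℂ) * Real.pi * Complex.I * (((r : ℕ) + 1) * ((u : ℕ) + 1)) / n
        = 2 * Real.pi * Complex.I * ((((r : ℕ) + 1) * ((u : ℕ) + 1) : ℕ)) / n := by
      push_cast; ring
    rw [h1, h2, hform, hform, map_pow, hconj, inv_pow,
      ← zpow_natCast ζ (((r : ℕ) + 1) * ((s : ℕ) + 1)),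
      ← zpow_natCast ζ (((r : ℕ) + 1) * ((u : ℕ) + 1)),
      ← zpow_neg, ← zpow_add₀ hζ0,
      ← zpow_natCast (ζ ^ ((s : ℤ) - (u : ℤ))) ((r : ℕ) + 1), ← zpow_mul]
    congr 1
    push_cast
    ring
  rw [Finset.sum_congr rfl fun r _ => hterm r]
  by_cases hsu : s = u
  · subst hsu
    simp
  · rw [if_neg hsu]
    set ξ : ℂ := ζ ^ ((s : ℤ) - (u : ℤ)) with hξdef
    have hξ1 : ξ ≠ 1 := by
      intro h
      rw [hξdef, hprim.zpow_eq_one_iff_dvd] at h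
      obtain ⟨k, hk⟩ := h
      have hs : (s : ℤ) < n := by exact_mod_cast s.2
      have hu : (u : ℤ) < n := by exact_mod_cast u.2
      have hs0 : (0 : ℤ) ≤ s := by positivity
      have hu0 : (0 : ℤ) ≤ u := by positivity
      have hne : (s : ℤ) - (u : ℤ) ≠ 0 := by
        intro h0
        exact hsu (Fin.ext (by omega))
      have hn' : (0 : ℤ) < n := by exact_mod_cast hn
      have h1 : -(n : ℤ) < (n : ℤ) * k := by omega
      have h2 : (n : ℤ) * k < n := by omega
      have h3 : (n : ℤ) * k ≠ 0 := by omega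
      rcases lt_trichotomy k 0 with hk0 | rfl | hk0
      · nlinarith
      · simp at h3
      · nlinarith
    have hξn : ξ ^ n = 1 := by
      rw [hξdef, ← zpow_natCast, ← zpow_mul, mul_comm, zpow_mul, zpow_natCast,
        hprim.pow_eq_one, one_zpow]
    calc ∑ r : Fin n, ξ ^ ((r : ℕ) + 1)
        = ∑ r ∈ Finset.range n, ξ ^ (r + 1) := Fin.sum_univ_eq_sum_range (fun m => ξ ^ (m + 1)) n
      _ = ξ * ∑ r ∈ Finset.range n, ξ ^ r := by
          rw [Finset.mul_sum]
          exact Finset.sum_congr rfl fun r _ => by rw [pow_succ]; ring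
      _ = 0 := by rw [geom_sum_eq hξ1, hξn]; simp

private lemma parseval (n : ℕ) (hn : 0 < n) (z : Fin n → ℂ) :
    ∑ r : Fin n, Complex.normSq (∑ s : Fin n,
        Complex.exp (2 * Real.pi * Complex.I * (((r : ℕ) + 1) * ((s : ℕ) + 1)) / n) * z s)
      = n * ∑ s : Fin n, Complex.normSq (z s) := by
  have ortho := fun (s u : Fin n) => ortho_sum n hn s u
  set a : Fin n → Fin n → ℂ := fun r s =>
    Complex.exp (2 * Real.pi * Complex.I * (((r : ℕ) + 1) * ((s : ℕ) + 1)) / n) with ha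
  have key : ∑ r : Fin n, (Complex.normSq (∑ s : Fin n, a r s * z s) : ℂ)
      = (n : ℂ) * ∑ s : Fin n, (Complex.normSq (z s) : ℂ) := by
    calc ∑ r : Fin n, (Complex.normSq (∑ s : Fin n, a r s * z s) : ℂ)
        = ∑ r : Fin n, (∑ s : Fin n, a r s * z s) *
            (starRingEnd ℂ) (∑ s : Fin n, a r s * z s) := by
          exact Finset.sum_congr rfl fun r _ => (Complex.mul_conj _).symm
      _ = ∑ r : Fin n, ∑ s : Fin n, ∑ u : Fin n,
            (a r s * (starRingEnd ℂ) (a r u)) * (z s * (starRingEnd ℂ) (z u)) := by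
          refine Finset.sum_congr rfl fun r _ => ?_
          rw [map_sum, Finset.sum_mul_sum]
          refine Finset.sum_congr rfl fun s _ => Finset.sum_congr rfl fun u _ => ?_
          rw [map_mul]; ring
      _ = ∑ s : Fin n, ∑ u : Fin n,
            (z s * (starRingEnd ℂ) (z u)) * ∑ r : Fin n, a r s * (starRingEnd ℂ) (a r u) := by
          rw [Finset.sum_comm]
          refine Finset.sum_congr rfl fun s _ => ?_
          rw [Finset.sum_comm]
          refine Finset.sum_congr rfl fun u _ => ?_
          rw [Finset.mul_sum]
          exact Finset.sum_congr rfl fun r _ => by ring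
      _ = ∑ s : Fin n, (z s * (starRingEnd ℂ) (z s)) * n := by
          refine Finset.sum_congr rfl fun s _ => ?_
          rw [Finset.sum_congr rfl fun u (_ : u ∈ Finset.univ) => by rw [ortho s u]]
          simp [mul_ite]
      _ = (n : ℂ) * ∑ s : Fin n, (Complex.normSq (z s) : ℂ) := by
          rw [Finset.mul_sum]
          exact Finset.sum_congr rfl fun s _ => by rw [Complex.mul_conj]; ring
  rw [← Complex.ofReal_inj]
  push_cast at key ⊢
  convert key using 2


/-- **Bilinear bound (2.3) for the Fourier/Toeplitz matrix.**
Let `1 ≤ p ≤ 2` with conjugate exponent `q` (`1/p + 1/q = 1`), and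
`a_{rs} = exp(2πi·rs/n)`.  For `y` in the unit ball of `ℓ_q^n(ℂ)` and
`z` with `|z_s| ≤ 1` for every `s`, one has
`|∑_{r,s} a_{rs} y_r z_s| ≤ n^{1/2 + 1/p}`. -/
theorem fourier_matrix_bilinear_bound
    (p q : ℝ≥0∞) (hp1 : 1 ≤ p) (hp2 : p ≤ 2) (hpq : 1 / p + 1 / q = 1)
    (n : ℕ) (hn : 0 < n)
    (y : PiLp q (fun _ : Fin n => ℂ)) (hy : ‖y‖ ≤ 1)
    (z : Fin n → ℂ) (hz : ∀ s, ‖z s‖ ≤ 1) :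
    ‖∑ r : Fin n, ∑ s : Fin n,
        Complex.exp (2 * Real.pi * Complex.I *
            (((r : ℕ) + 1) * ((s : ℕ) + 1)) / n) * y r * z s‖ ≤
      (n : ℝ) ^ ((1 : ℝ) / 2 + 1 / p.toReal) := by
  have hp_ne_top : p ≠ ⊤ := by
    intro h
    rw [h] at hp2
    exact absurd hp2 (by simp)
  set t := p.toReal with htdef
  have ht1 : (1 : ℝ) ≤ t := by
    rw [← ENNReal.toReal_one]
    exact ENNReal.toReal_mono hp_ne_top hp1
  have ht2 : t ≤ 2 := by
    have h2 : ((2 : ℝ≥0∞)).toReal = 2 := by simp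
    rw [← h2]
    exact ENNReal.toReal_mono (by simp) hp2
  have ht0 : (0 : ℝ) < t := lt_of_lt_of_le one_pos ht1
  set a : Fin n → Fin n → ℂ := fun r s =>
    Complex.exp (2 * Real.pi * Complex.I * (((r : ℕ) + 1) * ((s : ℕ) + 1)) / n) with ha
  set W : Fin n → ℝ := fun r => ‖∑ s : Fin n, a r s * z s‖ with hWdef
  have hWnn : ∀ r, 0 ≤ W r := fun r => norm_nonneg _
  have step0 : ‖∑ r : Fin n, ∑ s : Fin n, a r s * y r * z s‖
      ≤ ∑ r : Fin n, ‖y r‖ * W r := by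
    calc ‖∑ r : Fin n, ∑ s : Fin n, a r s * y r * z s‖
        = ‖∑ r : Fin n, y r * ∑ s : Fin n, a r s * z s‖ := by
          congr 1
          refine Finset.sum_congr rfl fun r _ => ?_
          rw [Finset.mul_sum]
          exact Finset.sum_congr rfl fun s _ => by ring
      _ ≤ ∑ r : Fin n, ‖y r * ∑ s : Fin n, a r s * z s‖ :=
          norm_sum_le _ _
      _ = ∑ r : Fin n, ‖y r‖ * W r := by
          exact Finset.sum_congr rfl fun r _ => by rw [norm_mul]
  have step1 : ∑ r : Fin n, W r ^ (2 : ℝ) ≤ (n : ℝ) ^ (2 : ℝ) := by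
    calc ∑ r : Fin n, W r ^ (2 : ℝ)
        = ∑ r : Fin n, Complex.normSq (∑ s : Fin n, a r s * z s) := by
          refine Finset.sum_congr rfl fun r _ => ?_
          rw [Real.rpow_two, hWdef, Complex.sq_norm]
      _ = n * ∑ s : Fin n, Complex.normSq (z s) := parseval n hn z
      _ ≤ (n : ℝ) * ∑ s : Fin n, (1 : ℝ) := by
          refine mul_le_mul_of_nonneg_left (Finset.sum_le_sum fun s _ => ?_) (by positivity)
          rw [← Complex.sq_norm]
          nlinarith [hz s, norm_nonneg (z s)]
      _ = (n : ℝ) * n := by simp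
      _ = (n : ℝ) ^ (2 : ℝ) := by rw [Real.rpow_two]; ring
  have step2 : ∑ r : Fin n, W r ^ t ≤ (n : ℝ) ^ (1 - t / 2) * ((n : ℝ) ^ (2 : ℝ)) ^ (t / 2) := by
    have h2t : (1 : ℝ) ≤ 2 / t := by rw [le_div_iff₀ ht0]; linarith
    have hkey := Real.inner_le_weight_mul_Lp_of_nonneg Finset.univ h2t (fun _ => (1 : ℝ))
      (fun r => W r ^ t) (fun _ => zero_le_one) (fun r => Real.rpow_nonneg (hWnn r) t)
    simp only [one_mul] at hkey
    have hinv : (2 / t : ℝ)⁻¹ = t / 2 := by field_simp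
    have hcard : ∑ _i ∈ Finset.univ (α := Fin n), (1 : ℝ) = n := by simp
    have hpow : ∀ r : Fin n, (W r ^ t) ^ (2 / t : ℝ) = W r ^ (2 : ℝ) := by
      intro r
      rw [← Real.rpow_mul (hWnn r)]
      congr 1
      field_simp
    rw [hcard, hinv] at hkey
    calc ∑ r : Fin n, W r ^ t
        ≤ (n : ℝ) ^ (1 - t / 2) * (∑ r : Fin n, (W r ^ t) ^ (2 / t : ℝ)) ^ (t / 2) := hkey
      _ = (n : ℝ) ^ (1 - t / 2) * (∑ r : Fin n, W r ^ (2 : ℝ)) ^ (t / 2) := by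
          rw [Finset.sum_congr rfl fun r _ => hpow r]
      _ ≤ (n : ℝ) ^ (1 - t / 2) * ((n : ℝ) ^ (2 : ℝ)) ^ (t / 2) := by
          gcongr
  have step3 : ∑ r : Fin n, ‖y r‖ * W r ≤ (∑ r : Fin n, W r ^ t) ^ (1 / t) := by
    by_cases hq : q = ⊤
    · subst hq
      have hinv : p⁻¹ = 1 := by simpa [one_div] using hpq
      have hp_one : p = 1 := by rw [← inv_inv p, hinv, inv_one]
      have ht_one : t = 1 := by rw [htdef, hp_one]; simp
      have hy' : ∀ r, ‖y r‖ ≤ 1 := by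
        intro r
        have h1 : ‖y r‖ ≤ ‖y‖ := by
          rw [PiLp.norm_eq_ciSup]
          exact le_ciSup (f := fun i => ‖y i‖) (Set.Finite.bddAbove (Set.finite_range _)) r
        exact h1.trans hy
      rw [ht_one]
      simp only [Real.rpow_one, div_one, Real.rpow_one]
      exact Finset.sum_le_sum fun r _ => mul_le_of_le_one_left (hWnn r) (hy' r)
    · have hq0 : q ≠ 0 := by
        rintro rfl
        simp [one_div] at hpq
      set qr := q.toReal with hqrdef
      have hqr0 : 0 < qr := ENNReal.toReal_pos hq0 hq
      have hp0 : p ≠ 0 := (zero_lt_one.trans_le hp1).ne'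
      have hsum : qr⁻¹ + t⁻¹ = 1 := by
        rw [one_div, one_div] at hpq
        have h1 : (p⁻¹ + q⁻¹).toReal = 1 := by rw [hpq]; simp
        rw [ENNReal.toReal_add (by simp [hp0]) (by simp [hq0]),
          ENNReal.toReal_inv, ENNReal.toReal_inv] at h1
        rw [← htdef] at h1  -- may be no-op
        linarith [h1]
      have hqr1 : 1 < qr := by
        have htpos : 0 < t⁻¹ := by positivity
        have h2 : qr⁻¹ < 1 := by linarith
        nlinarith [mul_inv_cancel₀ (ne_of_gt hqr0)]
      have hconj : Real.HolderConjugate qr t := ⟨by rw [inv_one]; exact hsum, hqr0, ht0⟩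
      have holder := Real.inner_le_Lp_mul_Lq_of_nonneg Finset.univ hconj
        (f := fun r => ‖y r‖) (g := W)
        (fun r _ => norm_nonneg (y r)) (fun r _ => hWnn r)
      have hynorm : (∑ r : Fin n, ‖y r‖ ^ qr) ^ (1 / qr) ≤ 1 := by
        have hnorm := PiLp.norm_eq_sum (p := q) (ENNReal.toReal_pos hq0 hq) y
        rw [hnorm] at hy
        simpa using hy
      calc ∑ r : Fin n, ‖y r‖ * W r
          ≤ (∑ r : Fin n, ‖y r‖ ^ qr) ^ (1 / qr) *
              (∑ r : Fin n, W r ^ t) ^ (1 / t) := holder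
        _ ≤ 1 * (∑ r : Fin n, W r ^ t) ^ (1 / t) := by
            gcongr
        _ = (∑ r : Fin n, W r ^ t) ^ (1 / t) := one_mul _
  have hn0 : (0 : ℝ) < n := by exact_mod_cast hn
  have stepA : (∑ r : Fin n, W r ^ t) ^ (1 / t) ≤ (n : ℝ) ^ ((1 : ℝ) / 2 + 1 / t) := by
    have h1 : ∑ r : Fin n, W r ^ t ≤ (n : ℝ) ^ (1 + t / 2) := by
      calc ∑ r : Fin n, W r ^ t
          ≤ (n : ℝ) ^ (1 - t / 2) * ((n : ℝ) ^ (2 : ℝ)) ^ (t / 2) := step2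
        _ = (n : ℝ) ^ (1 + t / 2) := by
            rw [← Real.rpow_mul (le_of_lt hn0), ← Real.rpow_add hn0]
            congr 1
            ring
    calc (∑ r : Fin n, W r ^ t) ^ (1 / t)
        ≤ ((n : ℝ) ^ (1 + t / 2)) ^ (1 / t) :=
          Real.rpow_le_rpow (Finset.sum_nonneg fun r _ => Real.rpow_nonneg (hWnn r) _)
            h1 (by positivity)
      _ = (n : ℝ) ^ ((1 + t / 2) * (1 / t)) := by rw [← Real.rpow_mul (le_of_lt hn0)]
      _ = (n : ℝ) ^ ((1 : ℝ) / 2 + 1 / t) := by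
          congr 1
          field_simp
          ring
  exact le_trans (le_trans step0 step3) stepA
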